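/- Let S : ℤ → ℤ[x] be defined by S_{-1} = 0, S_0 = 1, S_{k+1} = x·S_k − S_{k-1}, and define σ_n ∈ ℤ[x] by σ_n = S_{n-1} if n > 0, σ_0 = 0, σ_n = −σ_{−n} if n < 0. Let P9 = −8 + 4x + 16x^2 − 10x^3 − 16x^4 + 4x^5 + 8x^6 + 2x^7 and R8 = 4 + 6x − 10x^2 − 14x^3 + 4x^4 + 8x^5 + 2x^6 in ℤ[x], and for integers p, q set Q(p,q) = −σ_p·σ_q·P9 + (σ_{p+1}·σ_{q+1} + σ_{p−1}·σ_{q−1})·R8 + 1. If p·q ≥ 0, then the degree of the polynomial Q(p,q) equals |p| + |q| + 6. -/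
import Mathlib

open Polynomial in
/-- \`P9 = Q(8_9) - 1 = -8 + 4x + 16x² - 10x³ - 16x⁴ + 4x⁵ + 8x⁶ + 2x⁷\`. -/
noncomputable def kanenobuP9 : Polynomial ℤ :=
  -8 + 4 * X + 16 * X ^ 2 - 10 * X ^ 3 - 16 * X ^ 4 + 4 * X ^ 5 + 8 * X ^ 6 + 2 * X ^ 7

open Polynomial in
/-- \`R8 = (Q(8_8) - 1)/x = 4 + 6x - 10x² - 14x³ + 4x⁴ + 8x⁵ + 2x⁶\`. -/
noncomputable def kanenobuR8 : Polynomial ℤ :=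
  4 + 6 * X - 10 * X ^ 2 - 14 * X ^ 3 + 4 * X ^ 4 + 8 * X ^ 5 + 2 * X ^ 6

open Polynomial in
/-- If `p * q ≥ 0`, then the degree of Kanenobu's `Q` polynomial
`Q(p,q) = -σ_p σ_q P9 + (σ_{p+1} σ_{q+1} + σ_{p-1} σ_{q-1}) R8 + 1`
equals `|p| + |q| + 6`. -/
theorem kanenobu_Q_degree_of_nonneg (S σ : ℤ → Polynomial ℤ)
    (hSm1 : S (-1) = 0) (hS0 : S 0 = 1)
    (hSrec : ∀ k : ℤ, 0 ≤ k → S (k + 1) = Polynomial.X * S k - S (k - 1))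
    (hσpos : ∀ n : ℤ, 0 < n → σ n = S (n - 1)) (hσ0 : σ 0 = 0)
    (hσneg : ∀ n : ℤ, n < 0 → σ n = -σ (-n))
    (p q : ℤ) (hpq : 0 ≤ p * q) :
    (-(σ p * σ q * kanenobuP9) +
        (σ (p + 1) * σ (q + 1) + σ (p - 1) * σ (q - 1)) * kanenobuR8 + 1).natDegree =
      p.natAbs + q.natAbs + 6 := by
  have hR8deg : kanenobuR8.natDegree = 6 := by unfold kanenobuR8; compute_degree!
  have hR8c : kanenobuR8.leadingCoeff = 2 := by
    rw [Polynomial.leadingCoeff, hR8deg]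
    simp [kanenobuR8, coeff_X_pow, coeff_one, coeff_X]
  have hP9le : kanenobuP9.natDegree ≤ 7 := by unfold kanenobuP9; compute_degree
  -- S is monic of degree n
  have hS : ∀ n : ℕ, (S (n : ℤ)).Monic ∧ (S (n : ℤ)).natDegree = n := by
    intro n
    induction n using Nat.strong_induction_on with
    | _ n ih =>
      match n with
      | 0 => rw [Nat.cast_zero, hS0]; exact ⟨monic_one, natDegree_one⟩
      | 1 =>
        have h := hSrec 0 le_rfl
        rw [hS0, show (0 : ℤ) - 1 = -1 by ring, hSm1, zero_add] at h
        norm_num at h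
        rw [Nat.cast_one, h]
        exact ⟨monic_X, natDegree_X⟩
      | (n + 2) =>
        have h := hSrec ((n : ℤ) + 1) (by positivity)
        rw [show (n : ℤ) + 1 + 1 = ((n + 2 : ℕ) : ℤ) by push_cast; ring,
          show (n : ℤ) + 1 - 1 = (n : ℤ) by ring,
          show (n : ℤ) + 1 = ((n + 1 : ℕ) : ℤ) by push_cast; ring] at h
        obtain ⟨m1, d1⟩ := ih (n + 1) (by omega)
        obtain ⟨m0, d0⟩ := ih n (by omega)
        have mX : (X * S ((n + 1 : ℕ) : ℤ)).Monic := monic_X.mul m1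
        have dX : (X * S ((n + 1 : ℕ) : ℤ)).natDegree = n + 2 := by
          rw [monic_X.natDegree_mul m1, natDegree_X, d1]
          omega
        have hlt : (S (n : ℤ)).natDegree < (X * S ((n + 1 : ℕ) : ℤ)).natDegree := by
          omega
        refine ⟨?_, ?_⟩
        · rw [h]
          exact mX.sub_of_left (degree_lt_degree hlt)
        · rw [h, natDegree_sub_eq_left_of_natDegree_lt hlt, dX]
  -- σ at positive naturals
  have hσS : ∀ n : ℕ, σ ((n : ℤ) + 1) = S (n : ℤ) := by
    intro n
    rw [hσpos ((n : ℤ) + 1) (by positivity), add_sub_cancel_right]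
  have hσm1 : σ (-1) = -1 := by
    have h1 : σ (1 : ℤ) = S 0 := by rw [hσpos 1 one_pos]; norm_num
    rw [hσneg (-1) (by norm_num), neg_neg, h1, hS0]
  -- uniform degree bounds
  have hσa : ∀ n : ℕ, (σ (n : ℤ)).natDegree ≤ n - 1 := by
    intro n
    match n with
    | 0 => rw [Nat.cast_zero, hσ0]; simp
    | (k + 1) =>
      rw [show ((k + 1 : ℕ) : ℤ) = (k : ℤ) + 1 by push_cast; ring, hσS k, (hS k).2]
      omega
  have hσb : ∀ n : ℕ, (σ ((n : ℤ) - 1)).natDegree ≤ n - 2 := by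
    intro n
    match n with
    | 0 => rw [Nat.cast_zero, show (0 : ℤ) - 1 = -1 by ring, hσm1]; simp
    | 1 => rw [Nat.cast_one, sub_self, hσ0]; simp
    | (k + 2) =>
      rw [show ((k + 2 : ℕ) : ℤ) - 1 = (k : ℤ) + 1 by push_cast; ring, hσS k, (hS k).2]
      omega
  -- main computation for nonnegative entries
  have main : ∀ a b : ℕ,
      (-(σ (a : ℤ) * σ (b : ℤ) * kanenobuP9) +
        (σ ((a : ℤ) + 1) * σ ((b : ℤ) + 1) + σ ((a : ℤ) - 1) * σ ((b : ℤ) - 1)) * kanenobuR8 +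
        1).natDegree = a + b + 6 := by
    intro a b
    set A := σ (a : ℤ) * σ (b : ℤ) * kanenobuP9 with hA
    set T := σ ((a : ℤ) + 1) * σ ((b : ℤ) + 1) + σ ((a : ℤ) - 1) * σ ((b : ℤ) - 1) with hT
    -- the A part is negligible
    have hAfact : A.natDegree + 1 ≤ a + b + 6 ∨ A = 0 := by
      rcases Nat.eq_zero_or_pos a with ha | ha
      · right; subst ha; rw [hA, Nat.cast_zero, hσ0, zero_mul, zero_mul]
      rcases Nat.eq_zero_or_pos b with hb | hb
      · right; subst hb; rw [hA, Nat.cast_zero, hσ0, mul_zero, zero_mul]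
      left
      have h1 : A.natDegree ≤ (a - 1) + (b - 1) + 7 :=
        natDegree_mul_le.trans (add_le_add
          (natDegree_mul_le.trans (add_le_add (hσa a) (hσa b))) hP9le)
      omega
    have hAc : A.coeff (a + b + 6) = 0 := by
      rcases hAfact with h | h
      · exact coeff_eq_zero_of_natDegree_lt (by omega)
      · rw [h, coeff_zero]
    have hAd : A.natDegree ≤ a + b + 6 := by
      rcases hAfact with h | h
      · omega
      · rw [h, natDegree_zero]; omega
    -- the leading term T
    have hU : (σ ((a : ℤ) + 1) * σ ((b : ℤ) + 1)).Monic :=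
      ((hσS a) ▸ (hS a).1).mul ((hσS b) ▸ (hS b).1)
    have hUd : (σ ((a : ℤ) + 1) * σ ((b : ℤ) + 1)).natDegree = a + b := by
      rw [hσS a, hσS b, ((hS a).1).natDegree_mul (hS b).1, (hS a).2, (hS b).2]
    have hVd : (σ ((a : ℤ) - 1) * σ ((b : ℤ) - 1)).natDegree ≤ (a - 2) + (b - 2) :=
      natDegree_mul_le.trans (add_le_add (hσb a) (hσb b))
    have hVc : (σ ((a : ℤ) - 1) * σ ((b : ℤ) - 1)).coeff (a + b) = 0 ∨
        (σ ((a : ℤ) - 1) * σ ((b : ℤ) - 1)).coeff (a + b) = 1 := by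
      rcases Nat.eq_zero_or_pos (a + b) with hab | hab
      · right
        obtain ⟨ha, hb⟩ : a = 0 ∧ b = 0 := by omega
        subst ha; subst hb
        rw [Nat.cast_zero, show (0 : ℤ) - 1 = -1 by ring, hσm1]
        norm_num
      · left
        exact coeff_eq_zero_of_natDegree_lt (lt_of_le_of_lt hVd (by omega))
    have hTc : 0 < T.coeff (a + b) := by
      rw [hT, coeff_add]
      have hUc : (σ ((a : ℤ) + 1) * σ ((b : ℤ) + 1)).coeff (a + b) = 1 := by
        rw [← hUd]; exact hU.coeff_natDegree
      rcases hVc with h | h <;> rw [hUc, h] <;> norm_num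
    have hTd : T.natDegree ≤ a + b :=
      (natDegree_add_le _ _).trans (max_le hUd.le (hVd.trans (by omega)))
    have hTdeq : T.natDegree = a + b :=
      le_antisymm hTd (le_natDegree_of_ne_zero hTc.ne')
    -- leading coefficient of T * R8
    have hTR : (T * kanenobuR8).coeff (a + b + 6) = T.coeff (a + b) * 2 := by
      have := coeff_mul_degree_add_degree T kanenobuR8
      rw [hTdeq, hR8deg, hR8c] at this
      rw [this, Polynomial.leadingCoeff, hTdeq]
    have hTRd : (T * kanenobuR8).natDegree ≤ a + b + 6 :=
      natDegree_mul_le.trans (by omega)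
    -- the total coefficient at a+b+6
    have hQc : (-A + T * kanenobuR8 + 1).coeff (a + b + 6) = T.coeff (a + b) * 2 := by
      rw [coeff_add, coeff_add, coeff_neg, hAc, hTR, coeff_one]
      norm_num
    refine le_antisymm ?_ (le_natDegree_of_ne_zero ?_)
    · refine (natDegree_add_le _ _).trans (max_le ((natDegree_add_le _ _).trans
        (max_le ?_ hTRd)) ?_)
      · rw [natDegree_neg]; exact hAd
      · rw [natDegree_one]; omega
    · rw [hQc]; positivity
  -- reduce to nonnegative entries
  have hflip : ∀ n : ℤ, σ (-n) = -σ n := by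
    intro n
    rcases lt_trichotomy n 0 with h | h | h
    · rw [hσneg n h, neg_neg]
    · subst h; rw [neg_zero, hσ0, neg_zero]
    · rw [hσneg (-n) (by omega), neg_neg]
  rcases mul_nonneg_iff.mp hpq with ⟨hp, hq⟩ | ⟨hp, hq⟩
  · lift p to ℕ using hp with a
    lift q to ℕ using hq with b
    simpa using main a b
  · obtain ⟨a, rfl⟩ : ∃ a : ℕ, p = -(a : ℤ) := ⟨(-p).toNat, by omega⟩
    obtain ⟨b, rfl⟩ : ∃ b : ℕ, q = -(b : ℤ) := ⟨(-q).toNat, by omega⟩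
    have h1 : σ (-(a : ℤ)) = -σ (a : ℤ) := hflip a
    have h2 : σ (-(a : ℤ) + 1) = -σ ((a : ℤ) - 1) := by
      rw [show -(a : ℤ) + 1 = -((a : ℤ) - 1) by ring, hflip]
    have h3 : σ (-(a : ℤ) - 1) = -σ ((a : ℤ) + 1) := by
      rw [show -(a : ℤ) - 1 = -((a : ℤ) + 1) by ring, hflip]
    have h1' : σ (-(b : ℤ)) = -σ (b : ℤ) := hflip b
    have h2' : σ (-(b : ℤ) + 1) = -σ ((b : ℤ) - 1) := by
      rw [show -(b : ℤ) + 1 = -((b : ℤ) - 1) by ring, hflip]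
    have h3' : σ (-(b : ℤ) - 1) = -σ ((b : ℤ) + 1) := by
      rw [show -(b : ℤ) - 1 = -((b : ℤ) + 1) by ring, hflip]
    have key : -(σ (-(a : ℤ)) * σ (-(b : ℤ)) * kanenobuP9) +
        (σ (-(a : ℤ) + 1) * σ (-(b : ℤ) + 1) + σ (-(a : ℤ) - 1) * σ (-(b : ℤ) - 1)) *
          kanenobuR8 + 1 =
        -(σ (a : ℤ) * σ (b : ℤ) * kanenobuP9) +
        (σ ((a : ℤ) + 1) * σ ((b : ℤ) + 1) + σ ((a : ℤ) - 1) * σ ((b : ℤ) - 1)) *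
          kanenobuR8 + 1 := by
      rw [h1, h2, h3, h1', h2', h3']; ring
    rw [key, main a b]
    simp
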